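/- If a continuous function φ on the circle satisfies L_ω φ = 0 with ω irrational, then φ is constant. -/
import Mathlib

/-- A dense subgroup fact: ℤ·1 + ℤ·ω is dense for irrational ω. -/
lemma dense_closure_one_irr (ω : ℝ) (hω : Irrational ω) :
    Dense ((AddSubgroup.closure {1, ω} : AddSubgroup ℝ) : Set ℝ) := by
  rcases (AddSubgroup.closure {1, ω}).dense_or_cyclic with hd | ⟨a, ha⟩
  · exact hd
  · exfalso
    have h1 : (1 : ℝ) ∈ AddSubgroup.closure ({1, ω} : Set ℝ) :=
      AddSubgroup.subset_closure (by simp)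
    have h2 : ω ∈ AddSubgroup.closure ({1, ω} : Set ℝ) :=
      AddSubgroup.subset_closure (by simp)
    rw [ha, AddSubgroup.mem_closure_singleton] at h1 h2
    obtain ⟨n, hn⟩ := h1
    obtain ⟨m, hm⟩ := h2
    rw [zsmul_eq_mul] at hn hm
    have hn0 : n ≠ 0 := by rintro rfl; simp at hn
    have : ω = (m : ℝ) / (n : ℝ) := by
      rw [eq_div_iff (by exact_mod_cast hn0)]
      linear_combination (m : ℝ) * hn - (n : ℝ) * hm
    exact (hω.ne_rat (m / n)) (by rw [this]; push_cast; ring)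

/-- A continuous function invariant under 1 and irrational ω is constant. -/
lemma const_of_invariant (ω : ℝ) (hω : Irrational ω) (f : ℝ → ℂ)
    (hc : Continuous f) (h1 : ∀ x, f (x + 1) = f x) (h2 : ∀ x, f (x + ω) = f x) :
    ∀ x, f x = f 0 := by
  intro x
  -- the set of periods is a subgroup
  set P : AddSubgroup ℝ :=
    { carrier := {p | ∀ y, f (y + p) = f y}
      add_mem' := fun {a b} ha hb y => by rw [← add_assoc, hb, ha]
      zero_mem' := fun y => by simp
      neg_mem' := fun {a} ha y => by
        have := ha (y + -a); simpa using this.symm }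
  have hsub : AddSubgroup.closure {1, ω} ≤ P :=
    AddSubgroup.closure_le P |>.mpr (by
      rintro p (rfl | rfl)
      · exact h1
      · exact h2)
  have hdense : Dense ((P : AddSubgroup ℝ) : Set ℝ) :=
    (dense_closure_one_irr ω hω).mono hsub
  -- f is constant on a dense set
  have hclosed : IsClosed {y : ℝ | f y = f 0} :=
    isClosed_eq hc continuous_const
  have hPsub : ((P : AddSubgroup ℝ) : Set ℝ) ⊆ {y : ℝ | f y = f 0} := by
    intro p hp
    have := hp 0
    simpa using this
  have : Dense {y : ℝ | f y = f 0} := hdense.mono hPsub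
  have := hclosed.closure_eq ▸ this.closure_eq
  exact Set.eq_univ_iff_forall.mp this x

theorem kernel_of_Lomega_is_constant
    (ω : ℝ) (hω : Irrational ω)
    (φ : ℝ → ℂ) (hc : Continuous φ) (hper : Function.Periodic φ 1)
    (h : ∀ θ : ℝ, φ (θ + ω) - 2 * φ θ + φ (θ - ω) = 0) :
    ∃ k : ℂ, ∀ θ : ℝ, φ θ = k := by
  -- ψ θ = φ(θ+ω) - φ θ is invariant under both 1 and ω
  set ψ : ℝ → ℂ := fun θ => φ (θ + ω) - φ θ with hψ
  have hψc : Continuous ψ := (hc.comp (by continuity)).sub hc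
  have hψ1 : ∀ x, ψ (x + 1) = ψ x := by
    intro x
    simp only [hψ]
    rw [show x + 1 + ω = x + ω + 1 by ring, hper (x + ω), hper x]
  have hψω : ∀ x, ψ (x + ω) = ψ x := by
    intro x
    have hx := h (x + ω)
    rw [add_sub_cancel_right] at hx
    simp only [hψ]
    linear_combination hx
  have hconst : ∀ x, ψ x = ψ 0 := const_of_invariant ω hω ψ hψc hψ1 hψω
  -- φ(θ + nω) = φ θ + n * ψ 0
  have hiter : ∀ (n : ℕ), φ ((n : ℝ) * ω) = φ 0 + n * ψ 0 := by
    intro n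
    induction n with
    | zero => simp
    | succ n ih =>
      have hx := hconst ((n : ℝ) * ω)
      simp only [hψ] at hx ih ⊢
      push_cast
      rw [show ((n:ℝ)+1)*ω = (n:ℝ)*ω+ω by ring]
      linear_combination hx + ih
  -- φ is bounded
  obtain ⟨C, hC⟩ : ∃ C, ∀ x, ‖φ x‖ ≤ C := by
    obtain ⟨C, hC⟩ := (isCompact_Icc (a := (0:ℝ)) (b := 1)).exists_bound_of_continuousOn
      hc.continuousOn
    refine ⟨C, fun x => ?_⟩
    have hfr : φ (Int.fract x) = φ x := by
      have h2 := hper.sub_int_mul_eq (x := x) ⌊x⌋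
      rw [mul_one] at h2
      rw [Int.fract]
      exact h2
    rw [← hfr]
    exact hC _ ⟨(Int.fract_nonneg x), le_of_lt (by simpa using Int.fract_lt_one x)⟩
  -- hence ψ 0 = 0
  have hψ0 : ψ 0 = 0 := by
    by_contra hne
    obtain ⟨n, hn⟩ := exists_nat_gt ((C + C) / ‖ψ 0‖)
    have hpos : 0 < ‖ψ 0‖ := norm_pos_iff.mpr hne
    have h1 : (n : ℝ) * ‖ψ 0‖ ≤ C + C := by
      have := hiter n
      have : (n : ℝ) * ‖ψ 0‖ = ‖(n : ℂ) * ψ 0‖ := by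
        simp [norm_mul]
      rw [this]
      calc ‖(n : ℂ) * ψ 0‖ = ‖φ ((n : ℝ) * ω) - φ 0‖ := by
            rw [hiter n]; ring_nf
          _ ≤ ‖φ ((n : ℝ) * ω)‖ + ‖φ 0‖ := norm_sub_le _ _
          _ ≤ C + C := add_le_add (hC _) (hC _)
    have h2 : (C + C) / ‖ψ 0‖ < n := hn
    rw [div_lt_iff₀ hpos] at h2
    linarith
  -- now φ is invariant under ω and 1, so constant
  have hinv : ∀ x, φ (x + ω) = φ x := by
    intro x
    have := hconst x
    rw [hψ0] at this
    simp only [hψ] at this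
    linear_combination this
  exact ⟨φ 0, const_of_invariant ω hω φ hc (fun x => hper x) hinv⟩
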